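/- Let A and P be symmetric positive definite N×N matrices, b ∈ ℝ^N, x* = A^{-1}b, and let x_k denote the PCG iterates for initial guess x_0. Then there holds the Pythagoras identity ‖x* − x_{k+1}‖_A² + ‖x_{k+1} − x_k‖_A² = ‖x* − x_k‖_A² for all k ∈ ℕ₀. -/

import Mathlib

open Matrix

/-- One step of the preconditioned conjugate gradient method (PCG), acting on the
state `(x, r, p)` (iterate, residual, search direction); `Pinv` is the inverse of
the preconditioner. -/
noncomputable def pcgStep {N : ℕ} (A Pinv : Matrix (Fin N) (Fin N) ℝ)
    (s : (Fin N → ℝ) × (Fin N → ℝ) × (Fin N → ℝ)) :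
    (Fin N → ℝ) × (Fin N → ℝ) × (Fin N → ℝ) :=
  let x := s.1
  let r := s.2.1
  let p := s.2.2
  let α := (r ⬝ᵥ Pinv.mulVec r) / (p ⬝ᵥ A.mulVec p)
  let r' := r - α • A.mulVec p
  let β := (r' ⬝ᵥ Pinv.mulVec r') / (r ⬝ᵥ Pinv.mulVec r)
  (x + α • p, r', Pinv.mulVec r' + β • p)

/-- The PCG iteration: state after `k` steps, starting from the initial guess `x0`
for the linear system `A x = b` with preconditioner `P` (passed via `Pinv = P⁻¹`). -/
noncomputable def pcg {N : ℕ} (A Pinv : Matrix (Fin N) (Fin N) ℝ)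
    (b x0 : Fin N → ℝ) : ℕ → (Fin N → ℝ) × (Fin N → ℝ) × (Fin N → ℝ)
  | 0 => (x0, b - A.mulVec x0, Pinv.mulVec (b - A.mulVec x0))
  | k + 1 => pcgStep A Pinv (pcg A Pinv b x0 k)

lemma posdef_eq_zero {N : ℕ} {M : Matrix (Fin N) (Fin N) ℝ} (hM : M.PosDef)
    {v : Fin N → ℝ} (h : v ⬝ᵥ M.mulVec v = 0) : v = 0 := by
  by_contra hv
  have := hM.dotProduct_mulVec_pos hv
  rw [star_trivial] at this
  exact absurd h (ne_of_gt this)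

lemma sym_dot {N : ℕ} {M : Matrix (Fin N) (Fin N) ℝ} (hM : M.IsHermitian)
    (u v : Fin N → ℝ) : u ⬝ᵥ M.mulVec v = v ⬝ᵥ M.mulVec u := by
  rw [dotProduct_mulVec, dotProduct_comm, ← mulVec_transpose]
  congr 1
  rw [show Mᵀ = M from hM]

lemma pcg_invariant {N : ℕ} {A Pinv : Matrix (Fin N) (Fin N) ℝ}
    (hA : A.PosDef) (hPinv : Pinv.PosDef) (b x0 : Fin N → ℝ) (k : ℕ) :
    (pcg A Pinv b x0 k).2.1 = b - A.mulVec (pcg A Pinv b x0 k).1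
    ∧ (pcg A Pinv b x0 k).2.1 ⬝ᵥ (pcg A Pinv b x0 k).2.2
        = (pcg A Pinv b x0 k).2.1 ⬝ᵥ Pinv.mulVec (pcg A Pinv b x0 k).2.1
    ∧ ((pcg A Pinv b x0 k).2.2 = 0 → (pcg A Pinv b x0 k).2.1 = 0) := by
  induction k with
  | zero =>
    refine ⟨rfl, rfl, fun h => ?_⟩
    apply posdef_eq_zero hPinv
    show (b - A.mulVec x0) ⬝ᵥ Pinv.mulVec (b - A.mulVec x0) = 0
    rw [show Pinv.mulVec (b - A.mulVec x0) = 0 from h, dotProduct_zero]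
  | succ k ih =>
    obtain ⟨hr, hrp, hp0⟩ := ih
    set x := (pcg A Pinv b x0 k).1 with hx
    set r := (pcg A Pinv b x0 k).2.1 with hrr
    set p := (pcg A Pinv b x0 k).2.2 with hpp
    show (r - _ • A.mulVec p = b - A.mulVec (x + _ • p)) ∧ _
    set α := (r ⬝ᵥ Pinv.mulVec r) / (p ⬝ᵥ A.mulVec p) with hα
    set r' := r - α • A.mulVec p with hr'
    have h1 : r' = b - A.mulVec (x + α • p) := by
      rw [hr', hr, mulVec_add, mulVec_smul]
      abel
    have hrp' : r' ⬝ᵥ p = 0 := by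
      by_cases hp : p = 0
      · simp [hr', hp]
      · have hpAp : p ⬝ᵥ A.mulVec p ≠ 0 := by
          intro h; exact hp (posdef_eq_zero hA h)
        rw [hr', sub_dotProduct, smul_dotProduct, smul_eq_mul,
          dotProduct_comm (A.mulVec p) p, hα, div_mul_cancel₀ _ hpAp, hrp, sub_self]
    refine ⟨h1, ?_, ?_⟩
    · show r' ⬝ᵥ (Pinv.mulVec r' + _ • p) = r' ⬝ᵥ Pinv.mulVec r'
      rw [dotProduct_add, dotProduct_smul, smul_eq_mul, hrp', mul_zero, add_zero]
    · intro h
      apply posdef_eq_zero hPinv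
      have h2 : Pinv.mulVec r' + ((r' ⬝ᵥ Pinv.mulVec r') / (r ⬝ᵥ Pinv.mulVec r)) • p = 0 := h
      have := congrArg (fun v => r' ⬝ᵥ v) h2
      show r' ⬝ᵥ Pinv.mulVec r' = 0
      simpa [dotProduct_add, dotProduct_smul, smul_eq_mul, hrp'] using this

/-- Pythagoras identity for PCG:
`‖x* − x_{k+1}‖_A² + ‖x_{k+1} − x_k‖_A² = ‖x* − x_k‖_A²` for all `k`. -/
theorem stmt_1 {N : ℕ} (A P : Matrix (Fin N) (Fin N) ℝ)
    (hA : A.PosDef) (hP : P.PosDef)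
    (b x0 xstar : Fin N → ℝ) (hxstar : A.mulVec xstar = b) :
    ∀ k : ℕ,
      (xstar - (pcg A P⁻¹ b x0 (k + 1)).1) ⬝ᵥ A.mulVec (xstar - (pcg A P⁻¹ b x0 (k + 1)).1)
        + ((pcg A P⁻¹ b x0 (k + 1)).1 - (pcg A P⁻¹ b x0 k).1) ⬝ᵥ
            A.mulVec ((pcg A P⁻¹ b x0 (k + 1)).1 - (pcg A P⁻¹ b x0 k).1)
      = (xstar - (pcg A P⁻¹ b x0 k).1) ⬝ᵥ A.mulVec (xstar - (pcg A P⁻¹ b x0 k).1) := by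
  intro k
  obtain ⟨hr, hrp, hp0⟩ := pcg_invariant hA hP.inv b x0 k
  set x := (pcg A P⁻¹ b x0 k).1 with hx
  set r := (pcg A P⁻¹ b x0 k).2.1 with hrr
  set p := (pcg A P⁻¹ b x0 k).2.2 with hpp
  have hx1 : (pcg A P⁻¹ b x0 (k + 1)).1
      = x + ((r ⬝ᵥ P⁻¹.mulVec r) / (p ⬝ᵥ A.mulVec p)) • p := rfl
  set α := (r ⬝ᵥ P⁻¹.mulVec r) / (p ⬝ᵥ A.mulVec p) with hα
  rw [hx1]
  have hd : x + α • p - x = α • p := by abel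
  rw [hd]
  set e := xstar - x with he
  have he2 : xstar - (x + α • p) = e - α • p := by rw [he]; abel
  rw [he2]
  have hAe : A.mulVec e = r := by
    rw [he, hr, mulVec_sub, hxstar]
  have key : e ⬝ᵥ A.mulVec p = α * (p ⬝ᵥ A.mulVec p) := by
    by_cases hp : p = 0
    · simp [hp]
    · have hpAp : p ⬝ᵥ A.mulVec p ≠ 0 := fun h => hp (posdef_eq_zero hA h)
      rw [hα, div_mul_cancel₀ _ hpAp, sym_dot hA.1 e p, hAe, ← hrp, dotProduct_comm]
  have hsym : p ⬝ᵥ A.mulVec e = e ⬝ᵥ A.mulVec p := sym_dot hA.1 p e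
  simp only [sub_dotProduct, dotProduct_sub, mulVec_sub, mulVec_smul,
    smul_dotProduct, dotProduct_smul, smul_eq_mul]
  rw [hsym]
  linear_combination (-2 * α) * key
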